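/- Let α ∈ (0,1) and let γ₁, γ₂ be reals with 0 < γ₂ < γ₁ < 1/2. For each n ∈ ℕ, let (W_j)_{j=1}^n be random variables on a probability space (Ω, F, P) that are independent and each distributed according to the standard normal law N(0,1). Set a_n = ⌊(1−α)n − n^{1−γ₂}⌋ and, for j ∈ {1,…,n}, define the event N_{n,j} = {r_n(|W_j|) ≤ a_n − n^{1−γ₂}} ∩ {|W|_{(a_n)} − |W_j| < n^{−γ₁}}, where r_n(|W_j|) is the rank of |W_j| among |W_1|, …, |W_n| and |W|_{(a_n)} is the a_n-th smallest of these values. Then for every L > 0, P[⋃_{j=1}^n N_{n,j}] = O(n^{−L}) as n → ∞. -/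

import Mathlib

open MeasureTheory ProbabilityTheory Filter Finset
open scoped ENNReal

/-- Rank of `x k` within the family `(x k')_{k' ∈ s}`. -/
noncomputable def rankIn (s : Finset ℕ) (x : ℕ → ℝ) (k : ℕ) : ℕ :=
  (s.filter fun k' => x k' ≤ x k).card

/-- The `r`-th order statistic (the `r`-th smallest value) of the family `(x k)_{k ∈ s}`.
For a family with pairwise distinct values, this is the unique value of rank `r`. -/
noncomputable def orderStatIn (s : Finset ℕ) (x : ℕ → ℝ) (r : ℕ) : ℝ :=
  if h : ∃ k, k ∈ s ∧ rankIn s x k = r then x h.choose else 0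

section aux
open Real
open scoped NNReal Nat
set_option maxHeartbeats 1000000

section rank

variable {s : Finset ℕ} {x : ℕ → ℝ}

lemma rankIn_mono {i k : ℕ} (hik : x i ≤ x k) : rankIn s x i ≤ rankIn s x k := by
  apply Finset.card_le_card
  intro j hj
  rw [Finset.mem_filter] at hj ⊢
  exact ⟨hj.1, le_trans hj.2 hik⟩

lemma rankIn_strict_mono {i k : ℕ} (hk : k ∈ s) (hik : x i < x k) :
    rankIn s x i < rankIn s x k := by
  apply Finset.card_lt_card
  constructor
  · intro j hj
    rw [Finset.mem_filter] at hj ⊢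
    exact ⟨hj.1, le_trans hj.2 hik.le⟩
  · intro hsub
    have := hsub (Finset.mem_filter.2 ⟨hk, le_refl _⟩)
    exact absurd (Finset.mem_filter.1 this).2 (not_le.2 hik)

lemma one_le_rankIn {i : ℕ} (hi : i ∈ s) : 1 ≤ rankIn s x i := by
  rw [Nat.one_le_iff_ne_zero, ← Nat.pos_iff_ne_zero]
  exact Finset.card_pos.2 ⟨i, Finset.mem_filter.2 ⟨hi, le_refl _⟩⟩

lemma rankIn_le_card (i : ℕ) : rankIn s x i ≤ s.card :=
  Finset.card_le_card (Finset.filter_subset _ _)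

lemma rankIn_injOn (hinj : Set.InjOn x s) : Set.InjOn (rankIn s x) s := by
  intro i hi k hk h
  by_contra hne
  rcases lt_trichotomy (x i) (x k) with hlt | heq | hgt
  · exact absurd h (Nat.ne_of_lt (rankIn_strict_mono hk hlt))
  · exact hne (hinj hi hk heq)
  · exact absurd h.symm (Nat.ne_of_lt (rankIn_strict_mono hi hgt))

lemma rankIn_le_iff (hinj : Set.InjOn x s) {i k : ℕ} (hi : i ∈ s) (hk : k ∈ s) :
    rankIn s x i ≤ rankIn s x k ↔ x i ≤ x k := by
  constructor
  · intro h
    by_contra hx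
    exact absurd h (not_le.2 (rankIn_strict_mono hi (not_le.1 hx)))
  · exact rankIn_mono

lemma image_rankIn {n : ℕ} (hinj : Set.InjOn x (Finset.Icc 1 n)) :
    (Finset.Icc 1 n).image (rankIn (Finset.Icc 1 n) x) = Finset.Icc 1 n := by
  apply Finset.eq_of_subset_of_card_le
  · intro r hr
    rcases Finset.mem_image.1 hr with ⟨i, hi, rfl⟩
    refine Finset.mem_Icc.2 ⟨one_le_rankIn hi, ?_⟩
    simpa [Nat.card_Icc] using rankIn_le_card (s := Finset.Icc 1 n) (x := x) i
  · rw [Finset.card_image_of_injOn (rankIn_injOn hinj)]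

/-- core deterministic lemma -/
lemma det_core {n a m' : ℕ} {x : ℕ → ℝ} (hinj : Set.InjOn x (Finset.Icc 1 n))
    {j : ℕ} (hj : j ∈ Finset.Icc 1 n) {δ : ℝ}
    (ha1 : 1 ≤ a) (han : a ≤ n)
    (h1 : rankIn (Finset.Icc 1 n) x j + m' ≤ a)
    (h2 : orderStatIn (Finset.Icc 1 n) x a - x j < δ) :
    m' ≤ ((Finset.Icc 1 n).filter fun i => x j < x i ∧ x i < x j + δ).card := by
  set s := Finset.Icc 1 n with hs
  set rk := rankIn s x with hrk
  -- existence of element of rank a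
  have hex : ∃ k, k ∈ s ∧ rk k = a := by
    have : a ∈ s.image rk := by
      rw [hrk, hs, image_rankIn hinj]
      exact Finset.mem_Icc.2 ⟨ha1, han⟩
    rcases Finset.mem_image.1 this with ⟨k, hk, hka⟩
    exact ⟨k, hk, hka⟩
  obtain ⟨c, hc, hca⟩ := hex
  -- orderStat value
  have hos : orderStatIn s x a = x c := by
    have hex' : ∃ k, k ∈ s ∧ rankIn s x k = a := ⟨c, hc, hca⟩
    rw [orderStatIn, dif_pos hex']
    obtain ⟨hd1, hd2⟩ := hex'.choose_spec
    exact congrArg x (rankIn_injOn hinj hd1 hc (hd2.trans hca.symm))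
  -- the intermediate set
  set S := s.filter (fun i => rk j < rk i ∧ rk i ≤ a) with hS
  have hcard : m' ≤ S.card := by
    have hsub : Finset.Ioc (rk j) a ⊆ S.image rk := by
      intro r hr
      rcases Finset.mem_Ioc.1 hr with ⟨hr1, hr2⟩
      have hrs : r ∈ s.image rk := by
        rw [hrk, hs, image_rankIn hinj]
        refine Finset.mem_Icc.2 ⟨?_, le_trans hr2 han⟩
        have := one_le_rankIn (s := s) (x := x) hj
        omega
      rcases Finset.mem_image.1 hrs with ⟨i, hi, rfl⟩
      exact Finset.mem_image.2 ⟨i, Finset.mem_filter.2 ⟨hi, hr1, hr2⟩, rfl⟩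
    have h1' : m' ≤ (Finset.Ioc (rk j) a).card := by
      rw [Nat.card_Ioc]; omega
    calc m' ≤ (Finset.Ioc (rk j) a).card := h1'
      _ ≤ (S.image rk).card := Finset.card_le_card hsub
      _ ≤ S.card := Finset.card_image_le
  refine le_trans hcard (Finset.card_le_card ?_)
  intro i hi
  rcases Finset.mem_filter.1 hi with ⟨his, hgt, hle⟩
  refine Finset.mem_filter.2 ⟨his, ?_, ?_⟩
  · by_contra hx
    exact absurd hgt (not_lt.2 (rankIn_mono (not_lt.1 hx)))
  · have hic : x i ≤ x c := by
      rw [← rankIn_le_iff hinj his hc, ← hrk, hca]; exact hle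
    have : x c < x j + δ := by rw [← hos]; linarith
    linarith

end rank


lemma gaussPDFReal_le (x : ℝ) : gaussianPDFReal 0 1 x ≤ rexp (-x ^ 2 / 2) := by
  rw [gaussianPDFReal]
  simp only [NNReal.coe_one, mul_one, sub_zero]
  have h1 : (√(2 * π))⁻¹ ≤ 1 := by
    refine inv_le_one_of_one_le₀ ?_
    rw [show (1:ℝ) = √1 by simp]
    exact Real.sqrt_le_sqrt (by nlinarith [Real.pi_gt_three])
  calc (√(2 * π))⁻¹ * rexp (-x ^ 2 / 2) ≤ 1 * rexp (-x ^ 2 / 2) :=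
        mul_le_mul_of_nonneg_right h1 (Real.exp_nonneg _)
    _ = rexp (-x ^ 2 / 2) := one_mul _

lemma gaussPDFReal_le_one (x : ℝ) : gaussianPDFReal 0 1 x ≤ 1 := by
  refine le_trans (gaussPDFReal_le x) ?_
  rw [Real.exp_le_one_iff]
  nlinarith [sq_nonneg x]

lemma gauss_set_le (s : Set ℝ) : gaussianReal 0 1 s ≤ volume s := by
  rw [gaussianReal_apply 0 one_ne_zero s]
  calc ∫⁻ x in s, gaussianPDF 0 1 x ≤ ∫⁻ _x in s, 1 := by
        refine lintegral_mono fun x => ?_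
        rw [gaussianPDF]
        exact le_trans (ENNReal.ofReal_le_ofReal (gaussPDFReal_le_one x)) (by simp)
    _ = volume s := by simp

lemma gauss_abs_Ioo (c d : ℝ) (hcd : c ≤ d) :
    gaussianReal 0 1 {y : ℝ | |y| ∈ Set.Ioo c d} ≤ ENNReal.ofReal (2 * (d - c)) := by
  refine le_trans (gauss_set_le _) ?_
  have hsub : {y : ℝ | |y| ∈ Set.Ioo c d} ⊆ Set.Ioo c d ∪ Set.Ioo (-d) (-c) := by
    intro y hy
    rcases hy with ⟨h1, h2⟩
    rcases abs_cases y with ⟨hy1, _⟩ | ⟨hy1, _⟩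
    · left; exact ⟨by linarith, by linarith⟩
    · right; constructor <;> [linarith; linarith]
  refine le_trans (measure_mono hsub) ?_
  refine le_trans (measure_union_le _ _) ?_
  rw [Real.volume_Ioo, Real.volume_Ioo]
  rw [show -c - -d = d - c by ring, ← ENNReal.ofReal_add (by linarith) (by linarith)]
  exact ENNReal.ofReal_le_ofReal (by linarith)

lemma gauss_tail (T : ℝ) (hT : 0 ≤ T) :
    gaussianReal 0 1 {y : ℝ | T ≤ |y|} ≤ ENNReal.ofReal (4 * rexp (-T ^ 2 / 4)) := by
  have hmeas : MeasurableSet {y : ℝ | T ≤ |y|} :=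
    measurableSet_Ici.preimage (continuous_abs.measurable)
  rw [gaussianReal_apply 0 one_ne_zero _]
  have hpdf : ∀ y ∈ {y : ℝ | T ≤ |y|},
      gaussianPDF 0 1 y ≤ ENNReal.ofReal (rexp (-T ^ 2 / 4) * rexp (-(1/4) * y ^ 2)) := by
    intro y hy
    rw [gaussianPDF]
    apply ENNReal.ofReal_le_ofReal
    refine le_trans (gaussPDFReal_le y) ?_
    have hy2 : T ^ 2 ≤ y ^ 2 := by
      simp only [Set.mem_setOf_eq] at hy
      nlinarith [abs_nonneg y, sq_abs y]
    rw [← Real.exp_add]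
    apply Real.exp_le_exp.2
    nlinarith
  calc ∫⁻ y in {y : ℝ | T ≤ |y|}, gaussianPDF 0 1 y
      ≤ ∫⁻ y in {y : ℝ | T ≤ |y|},
          ENNReal.ofReal (rexp (-T ^ 2 / 4) * rexp (-(1/4) * y ^ 2)) := by
        exact setLIntegral_mono' hmeas hpdf
    _ ≤ ∫⁻ y, ENNReal.ofReal (rexp (-T ^ 2 / 4) * rexp (-(1/4) * y ^ 2)) :=
        setLIntegral_le_lintegral _ _
    _ = ENNReal.ofReal (rexp (-T ^ 2 / 4)) * ∫⁻ y, ENNReal.ofReal (rexp (-(1/4) * y ^ 2)) := by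
        rw [← lintegral_const_mul' _ _ ENNReal.ofReal_ne_top]
        congr 1
        ext y
        rw [← ENNReal.ofReal_mul (Real.exp_nonneg _)]
    _ ≤ ENNReal.ofReal (rexp (-T ^ 2 / 4)) * ENNReal.ofReal 4 := by
        gcongr
        rw [← ofReal_integral_eq_lintegral_ofReal (integrable_exp_neg_mul_sq (by norm_num))
          (Filter.Eventually.of_forall fun y => Real.exp_nonneg _)]
        apply ENNReal.ofReal_le_ofReal
        rw [integral_gaussian]
        rw [show (π / (1/4) : ℝ) = 4 * π by ring]
        calc √(4 * π) ≤ √16 := Real.sqrt_le_sqrt (by nlinarith [Real.pi_le_four])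
          _ = 4 := by
            rw [show (16:ℝ) = 4 ^ 2 by norm_num, Real.sqrt_sq (by norm_num)]
    _ = ENNReal.ofReal (4 * rexp (-T ^ 2 / 4)) := by
        rw [← ENNReal.ofReal_mul (Real.exp_nonneg _), mul_comm]


lemma abs_eq_null {Ω : Type*} [MeasurableSpace Ω] (P : Measure Ω) [IsProbabilityMeasure P]
    (f g : Ω → ℝ) (hf : Measurable f) (hg : Measurable g)
    (hind : IndepFun f g P)
    (hlf : Measure.map f P = gaussianReal 0 1) (hlg : Measure.map g P = gaussianReal 0 1) :
    P {ω | |f ω| = |g ω|} = 0 := by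
  have hs : MeasurableSet {p : ℝ × ℝ | |p.1| = |p.2|} := by
    apply measurableSet_eq_fun
    · exact (continuous_abs.comp continuous_fst).measurable
    · exact (continuous_abs.comp continuous_snd).measurable
  have hmap := (indepFun_iff_map_prod_eq_prod_map_map hf.aemeasurable hg.aemeasurable).1 hind
  have : P {ω | |f ω| = |g ω|}
      = (Measure.map (fun ω => (f ω, g ω)) P) {p : ℝ × ℝ | |p.1| = |p.2|} := by
    rw [Measure.map_apply (hf.prodMk hg) hs]
    rfl
  rw [this, hmap, hlf, hlg, Measure.prod_apply hs]
  have hinner : ∀ x : ℝ, gaussianReal 0 1 ((fun y => (x, y)) ⁻¹' {p : ℝ × ℝ | |p.1| = |p.2|}) = 0 := by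
    intro x
    have hsub : ((fun y => (x, y)) ⁻¹' {p : ℝ × ℝ | |p.1| = |p.2|}) ⊆ {x, -x} := by
      intro y hy
      simp only [Set.mem_preimage, Set.mem_setOf_eq] at hy
      rcases abs_eq_abs.1 hy.symm with h | h
      · exact Or.inl h
      · exact Or.inr h
    refine le_antisymm (le_trans (measure_mono hsub) ?_) zero_le
    refine le_trans (measure_union_le _ _) ?_
    have h1 : gaussianReal 0 1 {x} = 0 :=
      le_antisymm (le_trans (gauss_set_le _) (by simp)) zero_le
    have h2 : gaussianReal 0 1 {-x} = 0 :=
      le_antisymm (le_trans (gauss_set_le _) (by simp)) zero_le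
    calc gaussianReal 0 1 {x} + gaussianReal 0 1 ({-x} : Set ℝ) = 0 := by rw [h1, h2, add_zero]
      _ ≤ 0 := le_refl _
  rw [lintegral_eq_zero_iff]
  · exact Filter.Eventually.of_forall fun x => hinner x
  · exact measurable_measure_prodMk_left hs


lemma meas_biInter_W {Ω : Type*} [MeasurableSpace Ω] (P : Measure Ω) [IsProbabilityMeasure P]
    (n : ℕ) (W : ℕ → Ω → ℝ)
    (hind : iIndepFun (m := fun _ : Fin n => Real.measurableSpace)
      (fun j : Fin n => W (j.1 + 1)) P)
    (B : ℕ → Set ℝ) (hB : ∀ i, MeasurableSet (B i)) (S : Finset ℕ)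
    (hS : S ⊆ Finset.Icc 1 n) :
    P (⋂ i ∈ S, W i ⁻¹' B i) = ∏ i ∈ S, P (W i ⁻¹' B i) := by
  rcases S.eq_empty_or_nonempty with rfl | ⟨i0, hi0⟩
  · simp
  · have hn : 1 ≤ n := by
      have := Finset.mem_Icc.1 (hS hi0); omega
    set e : ℕ → Fin n := fun i => ⟨min (i - 1) (n - 1), by omega⟩ with he
    have hei : ∀ i ∈ S, ((e i).1 + 1) = i := by
      intro i hi
      have := Finset.mem_Icc.1 (hS hi)
      simp only [he]
      omega
    have einj : ∀ x ∈ S, ∀ y ∈ S, e x = e y → x = y := by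
      intro a ha b hb hab
      have h1 := hei a ha
      have h2 := hei b hb
      rw [hab] at h1
      omega
    have key := hind.meas_biInter (S := S.image e)
      (s := fun j : Fin n => W (j.1 + 1) ⁻¹' B (j.1 + 1))
      (fun j _ => ⟨B (j.1 + 1), hB _, rfl⟩)
    rw [Finset.set_biInter_finset_image, Finset.prod_image einj] at key
    have hset : (⋂ i ∈ S, W i ⁻¹' B i)
        = ⋂ i ∈ S, W ((e i).1 + 1) ⁻¹' B ((e i).1 + 1) :=
      Set.iInter₂_congr fun i hi => by rw [hei i hi]
    rw [hset, key]
    refine Finset.prod_congr rfl fun i hi => ?_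
    have h := hei i hi
    simp only [h]

lemma count_bound {Ω : Type*} [MeasurableSpace Ω] (P : Measure Ω) [IsProbabilityMeasure P]
    (n m' : ℕ) (W : ℕ → Ω → ℝ)
    (hind : iIndepFun (m := fun _ : Fin n => Real.measurableSpace)
      (fun j : Fin n => W (j.1 + 1)) P)
    (B : Set ℝ) (hB : MeasurableSet B) (q : ℝ≥0∞)
    (hq : ∀ i ∈ Finset.Icc 1 n, P (W i ⁻¹' B) ≤ q) :
    P {ω | ∃ S : Finset ℕ, S ⊆ Finset.Icc 1 n ∧ S.card = m' ∧ ∀ i ∈ S, W i ω ∈ B}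
      ≤ (n.choose m') * q ^ m' := by
  have hsub : {ω | ∃ S : Finset ℕ, S ⊆ Finset.Icc 1 n ∧ S.card = m' ∧ ∀ i ∈ S, W i ω ∈ B}
      ⊆ ⋃ S ∈ (Finset.Icc 1 n).powersetCard m', ⋂ i ∈ S, W i ⁻¹' B := by
    intro ω hω
    obtain ⟨S, hSsub, hScard, hSmem⟩ := hω
    exact Set.mem_biUnion (Finset.mem_powersetCard.2 ⟨hSsub, hScard⟩)
      (Set.mem_iInter₂.2 hSmem)
  calc P _ ≤ ∑ S ∈ (Finset.Icc 1 n).powersetCard m', P (⋂ i ∈ S, W i ⁻¹' B) :=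
        le_trans (measure_mono hsub) (measure_biUnion_finset_le _ _)
    _ ≤ ∑ S ∈ (Finset.Icc 1 n).powersetCard m', q ^ m' := by
        refine Finset.sum_le_sum fun S hS => ?_
        rcases Finset.mem_powersetCard.1 hS with ⟨hSsub, hScard⟩
        rw [meas_biInter_W P n W hind (fun _ => B) (fun _ => hB) S hSsub]
        calc ∏ i ∈ S, P (W i ⁻¹' B) ≤ q ^ S.card :=
              Finset.prod_le_pow_card _ _ _ fun i hi => hq i (hSsub hi)
          _ = q ^ m' := by rw [hScard]
    _ = (n.choose m') * q ^ m' := by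
        rw [Finset.sum_const, Finset.card_powersetCard, Nat.card_Icc]
        simp [nsmul_eq_mul]


lemma pow_le_factorial_mul_exp (k : ℕ) {x : ℝ} (hx : 0 ≤ x) :
    x ^ k ≤ (k ! : ℝ) * rexp x := by
  have h1 : x ^ k / (k ! : ℝ) ≤ rexp x := by
    refine le_trans ?_ (Real.sum_le_exp_of_nonneg hx (k + 1))
    refine Finset.single_le_sum (f := fun i => x ^ i / (i ! : ℝ)) ?_ (Finset.self_mem_range_succ k)
    intro i _
    positivity
  have hk : (0:ℝ) < (k ! : ℝ) := by positivity
  calc x ^ k = x ^ k / (k ! : ℝ) * (k ! : ℝ) := by field_simp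
    _ ≤ rexp x * (k ! : ℝ) := by gcongr
    _ = (k ! : ℝ) * rexp x := mul_comm _ _

lemma tail_ev (L : ℝ) : ∀ᶠ n : ℕ in atTop,
    (n : ℝ) * (4 * rexp (-(n : ℝ) ^ 2 / 4)) ≤ (n : ℝ) ^ (-L) := by
  set k := ⌈L⌉₊ + 1 with hk
  filter_upwards [eventually_ge_atTop 1, eventually_ge_atTop (4 * 4 ^ k * k !)]
    with n hn1 hnN
  have hn : (1:ℝ) ≤ (n:ℝ) := by exact_mod_cast hn1
  have hnpos : (0:ℝ) < (n:ℝ) := by linarith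
  have key : 4 * (n:ℝ) * (n:ℝ) ^ L ≤ rexp ((n:ℝ) ^ 2 / 4) := by
    have e2 : (n:ℝ) ^ L ≤ (n:ℝ) ^ (k - 1 : ℕ) := by
      rw [← Real.rpow_natCast (n:ℝ) (k-1)]
      apply Real.rpow_le_rpow_of_exponent_le hn
      have : L ≤ (⌈L⌉₊ : ℝ) := Nat.le_ceil L
      have : ((k - 1 : ℕ) : ℝ) = (⌈L⌉₊ : ℝ) := by simp [hk]
      linarith [Nat.le_ceil L, this]
    have e2' : 4 * (n:ℝ) * (n:ℝ) ^ L ≤ 4 * (n:ℝ) ^ k := by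
      have : (n:ℝ) * (n:ℝ) ^ (k - 1 : ℕ) = (n:ℝ) ^ k := by
        rw [← pow_succ', show k - 1 + 1 = k by omega]
      nlinarith [pow_nonneg hnpos.le (k-1), hnpos]
    have e1 : ((n:ℝ) ^ 2 / 4) ^ k ≤ (k ! : ℝ) * rexp ((n:ℝ) ^ 2 / 4) :=
      pow_le_factorial_mul_exp k (by positivity)
    have e3 : (4:ℝ) * 4 ^ k * (k ! : ℝ) ≤ (n:ℝ) ^ k := by
      have h1 : ((4 * 4 ^ k * k ! : ℕ) : ℝ) ≤ (n : ℝ) := by exact_mod_cast hnN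
      have h2 : (n:ℝ) ≤ (n:ℝ) ^ k := by
        calc (n:ℝ) = (n:ℝ) ^ 1 := (pow_one _).symm
          _ ≤ (n:ℝ) ^ k := pow_le_pow_right₀ hn (by omega)
      push_cast at h1
      linarith
    have e4 : ((n:ℝ) ^ 2 / 4) ^ k = (n:ℝ) ^ k * (n:ℝ) ^ k / 4 ^ k := by
      rw [div_pow, ← pow_mul, two_mul, pow_add]
    have hk4 : (0:ℝ) < 4 ^ k := by positivity
    have hkf : (0:ℝ) < (k ! : ℝ) := by positivity
    have hnk : (0:ℝ) ≤ (n:ℝ) ^ k := by positivity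
    -- from e1, e4 : n^k * n^k ≤ 4^k * k! * exp
    have e5 : (n:ℝ) ^ k * (n:ℝ) ^ k ≤ 4 ^ k * (k ! : ℝ) * rexp ((n:ℝ) ^ 2 / 4) := by
      rw [e4] at e1
      calc (n:ℝ) ^ k * (n:ℝ) ^ k = ((n:ℝ) ^ k * (n:ℝ) ^ k / 4 ^ k) * 4 ^ k := by field_simp
        _ ≤ ((k ! : ℝ) * rexp ((n:ℝ) ^ 2 / 4)) * 4 ^ k := by gcongr
        _ = 4 ^ k * (k ! : ℝ) * rexp ((n:ℝ) ^ 2 / 4) := by ring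
    nlinarith [mul_le_mul_of_nonneg_right e3 hnk, Real.exp_pos ((n:ℝ) ^ 2 / 4), e2',
      mul_le_mul_of_nonneg_left e5 (by positivity : (0:ℝ) ≤ (4:ℝ)),
      mul_pos hk4 hkf]
  have hLpos : (0:ℝ) < (n:ℝ) ^ L := Real.rpow_pos_of_pos hnpos L
  rw [Real.rpow_neg hnpos.le, inv_eq_one_div, le_div_iff₀ hLpos]
  calc (n:ℝ) * (4 * rexp (-(n:ℝ) ^ 2 / 4)) * (n:ℝ) ^ L
      = (4 * (n:ℝ) * (n:ℝ) ^ L) / rexp ((n:ℝ) ^ 2 / 4) := by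
        rw [show (-(n:ℝ)^2/4) = -((n:ℝ)^2/4) by ring, Real.exp_neg]
        ring
    _ ≤ 1 := (div_le_one (Real.exp_pos _)).2 key

lemma cells_ev (L γ₁ γ₂ : ℝ) (hγ₂ : 0 < γ₂) (hγ₁₂ : γ₂ < γ₁) (hγ₂1 : γ₂ < 1) :
    ∀ᶠ n : ℕ in atTop,
      ((n ^ 2 + 1 : ℕ) : ℝ) * (n.choose ⌈(n:ℝ) ^ (1 - γ₂)⌉₊ : ℝ)
        * (4 * (n:ℝ) ^ (-γ₁)) ^ (⌈(n:ℝ) ^ (1 - γ₂)⌉₊) ≤ (n:ℝ) ^ (-L) := by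
  set k := ⌈(L + 3) / (1 - γ₂)⌉₊ with hk
  have hlog2 : (0:ℝ) < Real.log 2 := Real.log_pos (by norm_num)
  have hev2 : ∀ᶠ n : ℕ in atTop, 4 * rexp 1 * (n:ℝ) ^ (γ₂ - γ₁) ≤ 1/2 := by
    have ht : Filter.Tendsto (fun n : ℕ => (n:ℝ) ^ (γ₂ - γ₁)) atTop (nhds 0) := by
      have h0 := (tendsto_rpow_neg_atTop (y := γ₁ - γ₂) (by linarith)).comp
        (tendsto_natCast_atTop_atTop (R := ℝ))
      have : (fun n : ℕ => (n:ℝ) ^ (γ₂ - γ₁))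
          = (fun x : ℝ => x ^ (-(γ₁ - γ₂))) ∘ (fun n : ℕ => (n:ℝ)) := by
        funext n
        simp [Function.comp, neg_sub]
      rw [this]
      exact h0
    have hc : (0:ℝ) < (8 * rexp 1)⁻¹ := by positivity
    filter_upwards [ht.eventually_lt_const hc] with n hn
    have he : (0:ℝ) < rexp 1 := Real.exp_pos 1
    rw [show (1/2 : ℝ) = 4 * rexp 1 * (8 * rexp 1)⁻¹ by field_simp; ring]
    have : (0:ℝ) ≤ 4 * rexp 1 := by positivity
    nlinarith [Real.rpow_nonneg (Nat.cast_nonneg n) (γ₂ - γ₁)]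
  have hev3 : ∀ᶠ n : ℕ in atTop, 2 * (k ! : ℝ) / (Real.log 2) ^ k ≤ (n:ℝ) :=
    (tendsto_natCast_atTop_atTop (R := ℝ)).eventually_ge_atTop _
  filter_upwards [eventually_ge_atTop 1, hev2, hev3] with n hn1 hbase hcnst
  have hn : (1:ℝ) ≤ (n:ℝ) := by exact_mod_cast hn1
  have hnpos : (0:ℝ) < (n:ℝ) := by linarith
  set m' := ⌈(n:ℝ) ^ (1 - γ₂)⌉₊ with hm'
  have hnr1 : (1:ℝ) ≤ (n:ℝ) ^ (1 - γ₂) := by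
    calc (1:ℝ) = (n:ℝ) ^ (0:ℝ) := (Real.rpow_zero _).symm
      _ ≤ (n:ℝ) ^ (1 - γ₂) := Real.rpow_le_rpow_of_exponent_le hn (by linarith)
  have hm'le : (n:ℝ) ^ (1 - γ₂) ≤ (m' : ℝ) := Nat.le_ceil _
  have hm'pos : (0:ℝ) < (m' : ℝ) := by linarith
  have hδpos : (0:ℝ) < (n:ℝ) ^ (-γ₁) := Real.rpow_pos_of_pos hnpos _
  have he : (0:ℝ) < rexp 1 := Real.exp_pos 1
  -- step: choose * q^m' ≤ (1/2)^m'
  have chain1 : (n.choose m' : ℝ) * (4 * (n:ℝ) ^ (-γ₁)) ^ m' ≤ (1/2 : ℝ) ^ m' := by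
    have c1 : (n.choose m' : ℝ) ≤ (n:ℝ) ^ m' / (m' ! : ℝ) := by
      have := Nat.choose_le_pow_div (α := ℝ) m' n
      simpa using this
    have c2 : (m' : ℝ) ^ m' ≤ (m' ! : ℝ) * rexp m' :=
      pow_le_factorial_mul_exp m' hm'pos.le
    have hfac : (0:ℝ) < (m' ! : ℝ) := by positivity
    have step1 : (n.choose m' : ℝ) * (4 * (n:ℝ) ^ (-γ₁)) ^ m'
        ≤ (4 * (n:ℝ) * (n:ℝ) ^ (-γ₁) * rexp 1 / (m' : ℝ)) ^ m' := by
      have hq : (0:ℝ) ≤ (4 * (n:ℝ) ^ (-γ₁)) := by positivity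
      calc (n.choose m' : ℝ) * (4 * (n:ℝ) ^ (-γ₁)) ^ m'
          ≤ ((n:ℝ) ^ m' / (m' ! : ℝ)) * (4 * (n:ℝ) ^ (-γ₁)) ^ m' := by
            apply mul_le_mul_of_nonneg_right c1 (by positivity)
        _ = (4 * (n:ℝ) * (n:ℝ) ^ (-γ₁)) ^ m' / (m' ! : ℝ) := by
            rw [mul_pow, mul_pow]; ring
        _ ≤ (4 * (n:ℝ) * (n:ℝ) ^ (-γ₁)) ^ m' * (rexp 1 ^ m' / (m' : ℝ) ^ m') := by
            rw [div_eq_mul_inv]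
            apply mul_le_mul_of_nonneg_left _ (by positivity)
            have c2' : (m' : ℝ) ^ m' ≤ (m' ! : ℝ) * rexp 1 ^ m' := by
              have hexp : rexp (m' : ℝ) = rexp 1 ^ m' := by
                rw [← Real.exp_nat_mul, mul_one]
              rw [← hexp]; exact c2
            rw [inv_eq_one_div, div_le_div_iff₀ hfac (pow_pos hm'pos m')]
            calc 1 * (m' : ℝ) ^ m' = (m' : ℝ) ^ m' := one_mul _
              _ ≤ (m' ! : ℝ) * rexp 1 ^ m' := c2'
              _ = rexp 1 ^ m' * (m' ! : ℝ) := mul_comm _ _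
        _ = (4 * (n:ℝ) * (n:ℝ) ^ (-γ₁) * rexp 1 / (m' : ℝ)) ^ m' := by
            rw [div_pow, mul_pow]; ring
    have step2 : 4 * (n:ℝ) * (n:ℝ) ^ (-γ₁) * rexp 1 / (m' : ℝ)
        ≤ 4 * rexp 1 * (n:ℝ) ^ (γ₂ - γ₁) := by
      have hna : (n:ℝ) * (n:ℝ) ^ (-γ₁) = (n:ℝ) ^ (1 - γ₁) := by
        rw [show (1 - γ₁) = 1 + (-γ₁) by ring, Real.rpow_add hnpos, Real.rpow_one]
      have hdd : (n:ℝ) ^ (1 - γ₁) / (n:ℝ) ^ (1 - γ₂) = (n:ℝ) ^ (γ₂ - γ₁) := by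
        rw [← Real.rpow_sub hnpos]
        congr 1; ring
      calc 4 * (n:ℝ) * (n:ℝ) ^ (-γ₁) * rexp 1 / (m' : ℝ)
          = 4 * rexp 1 * ((n:ℝ) ^ (1 - γ₁) / (m' : ℝ)) := by rw [mul_assoc 4, hna]; ring
        _ ≤ 4 * rexp 1 * ((n:ℝ) ^ (1 - γ₁) / (n:ℝ) ^ (1 - γ₂)) := by
            apply mul_le_mul_of_nonneg_left _ (by positivity)
            apply div_le_div_of_nonneg_left (by positivity) (by linarith) hm'le
        _ = 4 * rexp 1 * (n:ℝ) ^ (γ₂ - γ₁) := by rw [hdd]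
    calc (n.choose m' : ℝ) * (4 * (n:ℝ) ^ (-γ₁)) ^ m'
        ≤ (4 * (n:ℝ) * (n:ℝ) ^ (-γ₁) * rexp 1 / (m' : ℝ)) ^ m' := step1
      _ ≤ (1/2 : ℝ) ^ m' := by
          apply pow_le_pow_left₀ (by positivity)
          exact le_trans step2 hbase
  -- step: 2 n^2 (1/2)^m' ≤ n^(-L)
  have key6 : 2 * (n:ℝ) ^ (2:ℕ) * (n:ℝ) ^ L ≤ (2:ℝ) ^ m' := by
    have d1 : ((m' : ℝ) * Real.log 2) ^ k ≤ (k ! : ℝ) * (2:ℝ) ^ m' := by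
      have := pow_le_factorial_mul_exp k (x := (m' : ℝ) * Real.log 2) (by positivity)
      rwa [Real.exp_nat_mul, Real.exp_log (by norm_num : (0:ℝ) < 2)] at this
    have d2 : (Real.log 2) ^ k * (n:ℝ) ^ ((1 - γ₂) * k) ≤ ((m' : ℝ) * Real.log 2) ^ k := by
      have h1 : ((n:ℝ) ^ (1 - γ₂) * Real.log 2) ^ k ≤ ((m' : ℝ) * Real.log 2) ^ k := by
        apply pow_le_pow_left₀ (by positivity)
        exact mul_le_mul_of_nonneg_right hm'le hlog2.le
      have h2 : ((n:ℝ) ^ (1 - γ₂) * Real.log 2) ^ k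
          = (Real.log 2) ^ k * (n:ℝ) ^ ((1 - γ₂) * k) := by
        rw [mul_pow, Real.rpow_mul hnpos.le, Real.rpow_natCast]
        ring
      linarith [h1, h2.symm.le]
    have d3 : (n:ℝ) ^ (L + 3) ≤ (n:ℝ) ^ ((1 - γ₂) * k) := by
      apply Real.rpow_le_rpow_of_exponent_le hn
      have hken : (L + 3) / (1 - γ₂) ≤ (k : ℝ) := Nat.le_ceil _
      rw [div_le_iff₀ (by linarith : (0:ℝ) < 1 - γ₂)] at hken
      linarith
    have d4 : (n:ℝ) ^ (L + 3) = (n:ℝ) ^ (L + 2) * (n:ℝ) := by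
      rw [show L + 3 = (L + 2) + 1 by ring, Real.rpow_add hnpos, Real.rpow_one]
    have d5 : 2 * (n:ℝ) ^ (2:ℕ) * (n:ℝ) ^ L = 2 * (n:ℝ) ^ (L + 2) := by
      rw [show L + 2 = L + (2:ℕ) by norm_num, Real.rpow_add hnpos, Real.rpow_natCast]
      ring
    have hfk : (0:ℝ) < (k ! : ℝ) := by positivity
    have hlk : (0:ℝ) < (Real.log 2) ^ k := by positivity
    -- 2^m' ≥ (log2)^k n^{L+3} / k! ≥ 2 n^{L+2}
    have e1 : (Real.log 2) ^ k * (n:ℝ) ^ (L + 3) ≤ (k ! : ℝ) * (2:ℝ) ^ m' := by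
      calc (Real.log 2) ^ k * (n:ℝ) ^ (L + 3)
          ≤ (Real.log 2) ^ k * (n:ℝ) ^ ((1 - γ₂) * k) := by
            apply mul_le_mul_of_nonneg_left d3 hlk.le
        _ ≤ ((m' : ℝ) * Real.log 2) ^ k := d2
        _ ≤ (k ! : ℝ) * (2:ℝ) ^ m' := d1
    have e2 : 2 * (k ! : ℝ) ≤ (Real.log 2) ^ k * (n:ℝ) := by
      rw [div_le_iff₀ hlk] at hcnst
      linarith [hcnst]
    have hnL2 : (0:ℝ) < (n:ℝ) ^ (L + 2) := Real.rpow_pos_of_pos hnpos _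
    rw [d5]
    -- 2 k! n^{L+2} ≤ (log2)^k n n^{L+2} = (log2)^k n^{L+3} ≤ k! 2^m'
    have e3 : 2 * (k ! : ℝ) * (n:ℝ) ^ (L + 2) ≤ (k ! : ℝ) * (2:ℝ) ^ m' := by
      calc 2 * (k ! : ℝ) * (n:ℝ) ^ (L + 2)
          ≤ ((Real.log 2) ^ k * (n:ℝ)) * (n:ℝ) ^ (L + 2) := by
            apply mul_le_mul_of_nonneg_right e2 hnL2.le
        _ = (Real.log 2) ^ k * (n:ℝ) ^ (L + 3) := by rw [d4]; ring
        _ ≤ (k ! : ℝ) * (2:ℝ) ^ m' := e1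
    nlinarith [e3, hfk, hnL2]
  -- conclude
  have hsum : ((n ^ 2 + 1 : ℕ) : ℝ) ≤ 2 * (n:ℝ) ^ (2:ℕ) := by
    push_cast
    nlinarith [hn]
  have hhalf : (0:ℝ) ≤ (1/2 : ℝ) ^ m' := by positivity
  have main : ((n ^ 2 + 1 : ℕ) : ℝ) * (n.choose m' : ℝ) * (4 * (n:ℝ) ^ (-γ₁)) ^ m'
      ≤ 2 * (n:ℝ) ^ (2:ℕ) * (1/2:ℝ) ^ m' := by
    calc ((n ^ 2 + 1 : ℕ) : ℝ) * (n.choose m' : ℝ) * (4 * (n:ℝ) ^ (-γ₁)) ^ m'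
        = ((n ^ 2 + 1 : ℕ) : ℝ) * ((n.choose m' : ℝ) * (4 * (n:ℝ) ^ (-γ₁)) ^ m') := by ring
      _ ≤ ((n ^ 2 + 1 : ℕ) : ℝ) * (1/2:ℝ) ^ m' := by
          apply mul_le_mul_of_nonneg_left chain1 (by positivity)
      _ ≤ 2 * (n:ℝ) ^ (2:ℕ) * (1/2:ℝ) ^ m' := by
          apply mul_le_mul_of_nonneg_right hsum hhalf
  refine le_trans main ?_
  have h2m : (0:ℝ) < (2:ℝ) ^ m' := by positivity
  have hnL : (0:ℝ) < (n:ℝ) ^ L := Real.rpow_pos_of_pos hnpos L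
  rw [Real.rpow_neg hnpos.le, show (1/2:ℝ) ^ m' = ((2:ℝ) ^ m')⁻¹ by
    rw [one_div, inv_pow]]
  rw [show 2 * (n:ℝ) ^ (2:ℕ) * ((2:ℝ) ^ m')⁻¹ = 2 * (n:ℝ) ^ (2:ℕ) / (2:ℝ) ^ m' from
    (div_eq_mul_inv _ _).symm, inv_eq_one_div, div_le_div_iff₀ h2m hnL]
  linarith [key6]

end aux

set_option maxHeartbeats 1000000 in
/-- Lemma 4.1 (Lemma 2.6 of Inatsugu–Yoshida): for i.i.d. standard normal `W_1, …, W_n`,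
with `a_n = ⌊(1-α)n - n^{1-γ₂}⌋` and events
`N_{n,j} = {r_n(|W_j|) ≤ a_n - n^{1-γ₂}} ∩ {|W|_{(a_n)} - |W_j| < n^{-γ₁}}`,
one has `P[⋃_j N_{n,j}] = O(n^{-L})` for every `L > 0`. -/
theorem stmt_5 {Ω : Type*} [MeasurableSpace Ω] (P : Measure Ω) [IsProbabilityMeasure P]
    (α γ₁ γ₂ : ℝ) (hα : α ∈ Set.Ioo (0 : ℝ) 1)
    (hγ₂ : 0 < γ₂) (hγ₁₂ : γ₂ < γ₁) (hγ₁ : γ₁ < 1 / 2)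
    (W : ℕ → ℕ → Ω → ℝ) (hWmeas : ∀ n k, Measurable (W n k))
    (hWindep : ∀ n : ℕ, iIndepFun (m := fun _ : Fin n => Real.measurableSpace)
      (fun j : Fin n => W n (j.1 + 1)) P)
    (hWlaw : ∀ n : ℕ, ∀ j ∈ Finset.Icc 1 n, Measure.map (W n j) P = gaussianReal 0 1)
    (L : ℝ) (hL : 0 < L) :
    ∃ C : ℝ, ∀ᶠ n : ℕ in atTop,
      (P (⋃ j ∈ Finset.Icc 1 n,
        {ω : Ω |
          (rankIn (Finset.Icc 1 n) (fun i => |W n i ω|) j : ℝ)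
              ≤ (⌊(1 - α) * (n : ℝ) - (n : ℝ) ^ (1 - γ₂)⌋ : ℝ) - (n : ℝ) ^ (1 - γ₂) ∧
          orderStatIn (Finset.Icc 1 n) (fun i => |W n i ω|)
              (⌊(1 - α) * (n : ℝ) - (n : ℝ) ^ (1 - γ₂)⌋).toNat
            - |W n j ω| < (n : ℝ) ^ (-γ₁)})).toReal
      ≤ C * (n : ℝ) ^ (-L) := by
  classical
  obtain ⟨hα0, hα1⟩ := hα
  -- eventual bound: floor is at least 1
  have hfloor_ev : ∀ᶠ n : ℕ in atTop, (1 : ℤ) ≤ ⌊(1 - α) * (n : ℝ) - (n : ℝ) ^ (1 - γ₂)⌋ := by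
    have ht : Filter.Tendsto (fun n : ℕ => (n:ℝ) ^ (-γ₂)) atTop (nhds 0) := by
      have h0 := (tendsto_rpow_neg_atTop (y := γ₂) hγ₂).comp
        (tendsto_natCast_atTop_atTop (R := ℝ))
      exact h0
    have hc : (0:ℝ) < (1 - α) / 2 := by linarith
    have h2 : ∀ᶠ n : ℕ in atTop, (2 / (1 - α) : ℝ) ≤ (n : ℝ) :=
      (tendsto_natCast_atTop_atTop (R := ℝ)).eventually_ge_atTop _
    filter_upwards [ht.eventually_lt_const hc, h2, eventually_ge_atTop 1] with n h1 h2' hn1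
    have hn : (1:ℝ) ≤ (n:ℝ) := by exact_mod_cast hn1
    have hnpos : (0:ℝ) < (n:ℝ) := by linarith
    rw [Int.le_floor]
    push_cast
    have hsplit : (n:ℝ) ^ (1 - γ₂) = (n:ℝ) * (n:ℝ) ^ (-γ₂) := by
      rw [show (1 - γ₂) = 1 + (-γ₂) by ring, Real.rpow_add hnpos, Real.rpow_one]
    have : (n:ℝ) ^ (1 - γ₂) ≤ (1 - α) / 2 * (n:ℝ) := by
      rw [hsplit]
      nlinarith [h1.le, hnpos]
    have hmul : (1 - α) / 2 * (2 / (1 - α)) = 1 := by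
      rw [div_mul_div_comm]
      rw [div_eq_one_iff_eq (by nlinarith)]
      ring
    nlinarith [mul_le_mul_of_nonneg_left h2' hc.le, hmul]
  refine ⟨2, ?_⟩
  filter_upwards [eventually_ge_atTop 1, tail_ev L,
    cells_ev L γ₁ γ₂ hγ₂ hγ₁₂ (by linarith), hfloor_ev] with n hn1 htail hcells hfloor
  have hn : (1:ℝ) ≤ (n:ℝ) := by exact_mod_cast hn1
  have hnpos : (0:ℝ) < (n:ℝ) := by linarith
  set s := Finset.Icc 1 n with hsdef
  set aZ := ⌊(1 - α) * (n : ℝ) - (n : ℝ) ^ (1 - γ₂)⌋ with haZ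
  set a := aZ.toNat with ha
  set m' := ⌈(n:ℝ) ^ (1 - γ₂)⌉₊ with hm'
  set δ := (n:ℝ) ^ (-γ₁) with hδ
  have hδpos : (0:ℝ) < δ := Real.rpow_pos_of_pos hnpos _
  have ha1 : 1 ≤ a := by
    rw [ha]; omega
  have hacast : ((a : ℕ) : ℝ) = (aZ : ℝ) := by
    rw [ha]
    norm_cast
    omega
  have han : a ≤ n := by
    have h1 : aZ ≤ (n : ℤ) := by
      rw [haZ]
      calc ⌊(1 - α) * (n : ℝ) - (n : ℝ) ^ (1 - γ₂)⌋ ≤ ⌊(n:ℝ)⌋ := by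
            apply Int.floor_le_floor
            have h2 : (0:ℝ) ≤ (n:ℝ) ^ (1 - γ₂) := Real.rpow_nonneg hnpos.le _
            nlinarith [hnpos, hα0]
        _ = (n : ℤ) := Int.floor_natCast n
    rw [ha]
    omega
  -- event sets
  set E := (⋃ j ∈ s,
        {ω : Ω |
          (rankIn s (fun i => |W n i ω|) j : ℝ) ≤ (aZ : ℝ) - (n : ℝ) ^ (1 - γ₂) ∧
          orderStatIn s (fun i => |W n i ω|) a - |W n j ω| < δ}) with hE
  set Tail := (⋃ i ∈ s, W n i ⁻¹' {y : ℝ | (n:ℝ) ≤ |y|}) with hTail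
  set Cell := (fun k : ℕ => {ω : Ω | ∃ S : Finset ℕ, S ⊆ s ∧ S.card = m' ∧
      ∀ i ∈ S, W n i ω ∈ {y : ℝ | |y| ∈ Set.Ioo ((k:ℝ) * δ) (((k:ℝ) + 2) * δ)}}) with hCell
  set D := {ω : Ω | ∀ i ∈ s, ∀ l ∈ s, i ≠ l → |W n i ω| ≠ |W n l ω|} with hD
  -- inclusion
  have hincl : E ⊆ Dᶜ ∪ (Tail ∪ ⋃ k ∈ Finset.range (n ^ 2 + 1), Cell k) := by
    intro ω hω
    by_cases hDm : ω ∈ D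
    swap
    · exact Or.inl hDm
    right
    by_cases hT : ∃ i ∈ s, (n:ℝ) ≤ |W n i ω|
    · left
      obtain ⟨i, hi, hTi⟩ := hT
      exact Set.mem_biUnion hi hTi
    · right
      push_neg at hT
      rw [hE] at hω
      rw [Set.mem_iUnion₂] at hω
      obtain ⟨j, hj, hcond1, hcond2⟩ := hω
      set x := fun i => |W n i ω| with hx
      have hinj : Set.InjOn x ↑s := by
        intro i hi l hl heq
        by_contra hne
        exact hDm i hi l hl hne heq
      have h1n : rankIn s x j + m' ≤ a := by
        have hceil : (m' : ℝ) < (n:ℝ) ^ (1 - γ₂) + 1 :=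
          Nat.ceil_lt_add_one (Real.rpow_nonneg hnpos.le _)
        have hlt : ((rankIn s x j + m' : ℕ) : ℝ) < ((a + 1 : ℕ) : ℝ) := by
          push_cast
          rw [hacast]
          linarith [hcond1]
        have := Nat.cast_lt (α := ℝ) |>.1 hlt
        omega
      have hcount := det_core hinj hj ha1 han h1n hcond2
      set k := ⌊x j / δ⌋₊ with hkdef
      have hxj0 : 0 ≤ x j := abs_nonneg _
      have hxjn : x j < (n:ℝ) := hT j hj
      have hklow : (k:ℝ) * δ ≤ x j := by
        rw [hkdef]
        calc ((⌊x j / δ⌋₊ : ℝ)) * δ ≤ (x j / δ) * δ := by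
              apply mul_le_mul_of_nonneg_right (Nat.floor_le (by positivity)) hδpos.le
          _ = x j := by field_simp
      have hkhigh : x j < ((k:ℝ) + 1) * δ := by
        rw [hkdef]
        have := Nat.lt_floor_add_one (x j / δ)
        calc x j = (x j / δ) * δ := by field_simp
          _ < ((⌊x j / δ⌋₊ : ℝ) + 1) * δ := by
              apply mul_lt_mul_of_pos_right this hδpos
      have hkn : k ≤ n ^ 2 := by
        have h1 : x j / δ ≤ (n:ℝ) * (n:ℝ) ^ γ₁ := by
          rw [hδ, div_eq_mul_inv, ← Real.rpow_neg hnpos.le, neg_neg]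
          apply mul_le_mul_of_nonneg_right hxjn.le (Real.rpow_nonneg hnpos.le _)
        have h2 : (n:ℝ) * (n:ℝ) ^ γ₁ ≤ ((n ^ 2 : ℕ) : ℝ) := by
          push_cast
          have e1 : (n:ℝ) * (n:ℝ) ^ γ₁ = (n:ℝ) ^ (1 + γ₁) := by
            rw [Real.rpow_add hnpos, Real.rpow_one]
          have e2 : (n:ℝ) ^ (1 + γ₁) ≤ (n:ℝ) ^ (2:ℝ) :=
            Real.rpow_le_rpow_of_exponent_le hn (by linarith)
          have e3 : (n:ℝ) ^ (2:ℝ) = (n:ℝ) ^ (2:ℕ) := by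
            rw [← Real.rpow_natCast (n:ℝ) 2]
            norm_num
          calc (n:ℝ) * (n:ℝ) ^ γ₁ = (n:ℝ) ^ (1 + γ₁) := e1
            _ ≤ (n:ℝ) ^ (2:ℝ) := e2
            _ = (n:ℝ) ^ (2:ℕ) := e3
        have := Nat.floor_le_floor (le_trans h1 h2)
        rwa [Nat.floor_natCast] at this
      rw [Set.mem_iUnion₂]
      refine ⟨k, Finset.mem_range.2 (by omega), ?_⟩
      obtain ⟨S, hSsub, hScard⟩ := Finset.exists_subset_card_eq hcount
      refine ⟨S, hSsub.trans (Finset.filter_subset _ _), hScard, ?_⟩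
      intro i hiS
      have hifil := Finset.mem_filter.1 (hSsub hiS)
      obtain ⟨his, hgt, hlt⟩ := hifil
      constructor
      · calc (k:ℝ) * δ ≤ x j := hklow
          _ < x i := hgt
      · calc x i < x j + δ := hlt
          _ < ((k:ℝ) + 1) * δ + δ := by linarith
          _ = ((k:ℝ) + 2) * δ := by ring
  -- null set
  have hDc : P Dᶜ = 0 := by
    have hsub : Dᶜ ⊆ ⋃ i ∈ s, ⋃ l ∈ s.erase i, {ω : Ω | |W n i ω| = |W n l ω|} := by
      intro ω hω
      rw [hD] at hω
      simp only [Set.mem_compl_iff, Set.mem_setOf_eq, not_forall] at hω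
      obtain ⟨i, hi, l, hl, hne, heq⟩ := hω
      rw [not_not] at heq
      refine Set.mem_biUnion hi ?_
      refine Set.mem_biUnion (Finset.mem_erase.2 ⟨fun h => hne h.symm, hl⟩) ?_
      exact heq
    refine le_antisymm ?_ zero_le
    refine le_trans (measure_mono hsub) ?_
    refine le_trans (measure_biUnion_finset_le _ _) ?_
    rw [show (0:ℝ≥0∞) = ∑ i ∈ s, 0 from by simp]
    refine Finset.sum_le_sum fun i hi => ?_
    refine le_trans (measure_biUnion_finset_le _ _) ?_
    rw [show (0:ℝ≥0∞) = ∑ l ∈ s.erase i, 0 from by simp]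
    refine Finset.sum_le_sum fun l hl => ?_
    have hne : l ≠ i := (Finset.mem_erase.1 hl).1
    have hls : l ∈ s := (Finset.mem_erase.1 hl).2
    have hi' := Finset.mem_Icc.1 hi
    have hl' := Finset.mem_Icc.1 hls
    have hind : IndepFun (W n i) (W n l) P := by
      have := (hWindep n).indepFun
        (i := (⟨i - 1, by omega⟩ : Fin n)) (j := (⟨l - 1, by omega⟩ : Fin n))
        (by simp only [ne_eq, Fin.mk.injEq]; omega)
      have hieq : (⟨i - 1, by omega⟩ : Fin n).1 + 1 = i := by simp; omega
      have hleq : (⟨l - 1, by omega⟩ : Fin n).1 + 1 = l := by simp; omega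
      rw [hieq, hleq] at this
      exact this
    rw [abs_eq_null P (W n i) (W n l) (hWmeas n i) (hWmeas n l) hind
      (hWlaw n i hi) (hWlaw n l hls)]
  -- tail bound
  have hTailB : P Tail ≤ ENNReal.ofReal ((n:ℝ) ^ (-L)) := by
    have htm : MeasurableSet {y : ℝ | (n:ℝ) ≤ |y|} :=
      measurableSet_Ici.preimage continuous_abs.measurable
    calc P Tail ≤ ∑ i ∈ s, P (W n i ⁻¹' {y : ℝ | (n:ℝ) ≤ |y|}) :=
          measure_biUnion_finset_le _ _
      _ ≤ ∑ _i ∈ s, ENNReal.ofReal (4 * Real.exp (-(n:ℝ) ^ 2 / 4)) := by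
          refine Finset.sum_le_sum fun i hi => ?_
          rw [← Measure.map_apply (hWmeas n i) htm, hWlaw n i hi]
          exact gauss_tail (n:ℝ) hnpos.le
      _ = (n : ℝ≥0∞) * ENNReal.ofReal (4 * Real.exp (-(n:ℝ) ^ 2 / 4)) := by
          rw [Finset.sum_const, hsdef, Nat.card_Icc]
          simp [nsmul_eq_mul]
      _ = ENNReal.ofReal ((n:ℝ) * (4 * Real.exp (-(n:ℝ) ^ 2 / 4))) := by
          rw [← ENNReal.ofReal_natCast n, ← ENNReal.ofReal_mul (by positivity)]
      _ ≤ ENNReal.ofReal ((n:ℝ) ^ (-L)) := ENNReal.ofReal_le_ofReal htail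
  -- cells bound
  have hCellB : P (⋃ k ∈ Finset.range (n ^ 2 + 1), Cell k)
      ≤ ENNReal.ofReal ((n:ℝ) ^ (-L)) := by
    have hq : ∀ k : ℕ, ∀ i ∈ s, P (W n i ⁻¹' {y : ℝ | |y| ∈ Set.Ioo ((k:ℝ) * δ) (((k:ℝ) + 2) * δ)})
        ≤ ENNReal.ofReal (4 * δ) := by
      intro k i hi
      have hBm : MeasurableSet {y : ℝ | |y| ∈ Set.Ioo ((k:ℝ) * δ) (((k:ℝ) + 2) * δ)} :=
        measurableSet_Ioo.preimage continuous_abs.measurable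
      rw [← Measure.map_apply (hWmeas n i) hBm, hWlaw n i hi]
      refine le_trans (gauss_abs_Ioo _ _ (by nlinarith [hδpos])) ?_
      apply ENNReal.ofReal_le_ofReal
      nlinarith [hδpos]
    calc P (⋃ k ∈ Finset.range (n ^ 2 + 1), Cell k)
        ≤ ∑ k ∈ Finset.range (n ^ 2 + 1), P (Cell k) := measure_biUnion_finset_le _ _
      _ ≤ ∑ _k ∈ Finset.range (n ^ 2 + 1),
            ((n.choose m' : ℝ≥0∞) * ENNReal.ofReal (4 * δ) ^ m') := by
          refine Finset.sum_le_sum fun k hk => ?_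
          exact count_bound P n m' (W n) (hWindep n) _
            (measurableSet_Ioo.preimage continuous_abs.measurable)
            (ENNReal.ofReal (4 * δ)) (hq k)
      _ = ((n ^ 2 + 1 : ℕ) : ℝ≥0∞) * ((n.choose m' : ℝ≥0∞) * ENNReal.ofReal (4 * δ) ^ m') := by
          rw [Finset.sum_const, Finset.card_range]
          simp [nsmul_eq_mul]
      _ = ENNReal.ofReal (((n ^ 2 + 1 : ℕ) : ℝ) * (n.choose m' : ℝ) * (4 * δ) ^ m') := by
          rw [← ENNReal.ofReal_natCast (n ^ 2 + 1), ← ENNReal.ofReal_natCast (n.choose m'),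
            ← ENNReal.ofReal_pow (by positivity : (0:ℝ) ≤ 4 * δ),
            ← ENNReal.ofReal_mul (by positivity), ← ENNReal.ofReal_mul (by positivity)]
          congr 1
          ring
      _ ≤ ENNReal.ofReal ((n:ℝ) ^ (-L)) := ENNReal.ofReal_le_ofReal hcells
  -- assemble
  have hPE : P E ≤ ENNReal.ofReal (2 * (n:ℝ) ^ (-L)) := by
    calc P E ≤ P (Dᶜ ∪ (Tail ∪ ⋃ k ∈ Finset.range (n ^ 2 + 1), Cell k)) :=
          measure_mono hincl
      _ ≤ P Dᶜ + P (Tail ∪ ⋃ k ∈ Finset.range (n ^ 2 + 1), Cell k) := measure_union_le _ _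
      _ ≤ P Dᶜ + (P Tail + P (⋃ k ∈ Finset.range (n ^ 2 + 1), Cell k)) := by
          gcongr
          exact measure_union_le _ _
      _ ≤ 0 + (ENNReal.ofReal ((n:ℝ) ^ (-L)) + ENNReal.ofReal ((n:ℝ) ^ (-L))) := by
          gcongr
          exact le_of_eq hDc
      _ = ENNReal.ofReal (2 * (n:ℝ) ^ (-L)) := by
          rw [zero_add, ← ENNReal.ofReal_add (by positivity) (by positivity)]
          congr 1
          ring
  have := ENNReal.toReal_le_of_le_ofReal (by positivity) hPE
  exact this
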